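/- Let E be a Borel equivalence relation on a standard Borel space X and let Γ be a countably infinite group. Then the countable power E^ω is Borel reducible to the Γ-jump E^{[Γ]}. -/

import Mathlib

set_option maxHeartbeats 1600000
set_option linter.unusedSectionVars false

open Function

section JumpAux

variable {G : Type*} [Group G] [Infinite G]

lemma exists_not_mem_list (l : List G) : ∃ x : G, x ∉ l := by
  classical
  obtain ⟨x, hx⟩ := Infinite.exists_notMem_finset l.toFinset
  exact ⟨x, fun h => hx (List.mem_toFinset.mpr h)⟩

noncomputable def fresh (l : List G) : G := Classical.choose (exists_not_mem_list l)

lemma fresh_not_mem (l : List G) : fresh l ∉ l := Classical.choose_spec (exists_not_mem_list l)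

variable (e : ℕ → G)

noncomputable def histT : ℕ → List (G × G × G)
  | 0 => []
  | n + 1 =>
      let L := histT n
      let pu : List G := L.map fun t => t.2.2
      let pw : List G := L.map Prod.fst ++ L.map fun t => t.2.1
      let w : G := fresh (pu ++ pu.map fun p => (e n)⁻¹ * p)
      let bad : List G := pu.flatMap fun a => pu.flatMap fun b => pu.map fun c => a * b⁻¹ * c
      L ++ [(w, e n * w, fresh (pu ++ pw ++ [w, e n * w] ++ bad))]

noncomputable def puL (n : ℕ) : List G := (histT e n).map fun t => t.2.2

noncomputable def pwL (n : ℕ) : List G :=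
  (histT e n).map Prod.fst ++ (histT e n).map fun t => t.2.1

noncomputable def wch (n : ℕ) : G :=
  fresh (puL e n ++ (puL e n).map fun p => (e n)⁻¹ * p)

noncomputable def badL (n : ℕ) : List G :=
  (puL e n).flatMap fun a => (puL e n).flatMap fun b => (puL e n).map fun c => a * b⁻¹ * c

noncomputable def uch (n : ℕ) : G :=
  fresh (puL e n ++ pwL e n ++ [wch e n, e n * wch e n] ++ badL e n)

lemma histT_succ (n : ℕ) :
    histT e (n + 1) = histT e n ++ [(wch e n, e n * wch e n, uch e n)] := rfl

lemma mem_puL {n : ℕ} {x : G} : x ∈ puL e n ↔ ∃ i, i < n ∧ uch e i = x := by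
  induction n with
  | zero => simp [puL, histT]
  | succ n ih =>
    have h1 : puL e (n + 1) = puL e n ++ [uch e n] := by
      rw [puL, histT_succ, List.map_append]; rfl
    rw [h1, List.mem_append]
    simp only [List.mem_singleton, ih]
    constructor
    · rintro (⟨i, h, rfl⟩ | rfl)
      · exact ⟨i, by omega, rfl⟩
      · exact ⟨n, by omega, rfl⟩
    · rintro ⟨i, h, rfl⟩
      rcases Nat.lt_succ_iff_lt_or_eq.mp h with h' | rfl
      · exact Or.inl ⟨i, h', rfl⟩
      · exact Or.inr rfl

lemma mem_pwL {n : ℕ} {x : G} :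
    x ∈ pwL e n ↔ ∃ i, i < n ∧ (wch e i = x ∨ e i * wch e i = x) := by
  induction n with
  | zero => simp [pwL, histT]
  | succ n ih =>
    have h1 : pwL e (n + 1) =
        ((histT e n).map Prod.fst ++ [wch e n]) ++
          ((histT e n).map (fun t => t.2.1) ++ [e n * wch e n]) := by
      rw [pwL, histT_succ, List.map_append, List.map_append]; rfl
    have h2 : ∀ y : G, y ∈ pwL e n ↔
        y ∈ (histT e n).map Prod.fst ∨ y ∈ (histT e n).map (fun t => t.2.1) := by
      intro y; rw [pwL, List.mem_append]
    rw [h1]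
    simp only [List.mem_append, List.mem_singleton]
    constructor
    · rintro ((h | rfl) | (h | rfl))
      · rcases ih.mp ((h2 x).mpr (Or.inl h)) with ⟨i, hi, hx⟩
        exact ⟨i, by omega, hx⟩
      · exact ⟨n, by omega, Or.inl rfl⟩
      · rcases ih.mp ((h2 x).mpr (Or.inr h)) with ⟨i, hi, hx⟩
        exact ⟨i, by omega, hx⟩
      · exact ⟨n, by omega, Or.inr rfl⟩
    · rintro ⟨i, hi, hx⟩
      rcases Nat.lt_succ_iff_lt_or_eq.mp hi with h' | rfl
      · rcases (h2 x).mp (ih.mpr ⟨i, h', hx⟩) with h | h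
        · exact Or.inl (Or.inl h)
        · exact Or.inr (Or.inl h)
      · rcases hx with rfl | rfl
        · exact Or.inl (Or.inr rfl)
        · exact Or.inr (Or.inr rfl)

lemma uch_spec (n : ℕ) :
    uch e n ∉ (puL e n ++ pwL e n ++ [wch e n, e n * wch e n] ++ badL e n) :=
  fresh_not_mem _

lemma wch_spec (n : ℕ) :
    wch e n ∉ (puL e n ++ (puL e n).map fun p => (e n)⁻¹ * p) :=
  fresh_not_mem _

lemma uch_not_mem_puL (n : ℕ) : uch e n ∉ puL e n := by
  intro h; exact uch_spec e n (by simp [h])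

lemma uch_inj : Function.Injective (uch e) := by
  intro i j hij
  by_contra hne
  rcases Nat.lt_or_ge i j with h | h
  · exact uch_not_mem_puL e j ((mem_puL e).mpr ⟨i, h, hij⟩)
  · exact uch_not_mem_puL e i ((mem_puL e).mpr ⟨j, lt_of_le_of_ne h (Ne.symm hne), hij.symm⟩)

lemma uch_ne_wch (k n : ℕ) : uch e k ≠ wch e n := by
  intro hEq
  rcases lt_trichotomy k n with h | rfl | h
  · have hw : wch e n ∈ puL e n := (mem_puL e).mpr ⟨k, h, hEq⟩
    exact wch_spec e n (by simp [hw])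
  · exact uch_spec e k (by simp [hEq])
  · have : uch e k ∈ pwL e k := (mem_pwL e).mpr ⟨n, h, Or.inl hEq.symm⟩
    exact uch_spec e k (by simp [this])

lemma uch_ne_eww (k n : ℕ) : uch e k ≠ e n * wch e n := by
  intro hEq
  rcases lt_trichotomy k n with h | rfl | h
  · have h1 : e n * wch e n ∈ puL e n := (mem_puL e).mpr ⟨k, h, hEq⟩
    have h2 : wch e n ∈ (puL e n).map fun p => (e n)⁻¹ * p := by
      refine List.mem_map.mpr ⟨e n * wch e n, h1, ?_⟩
      rw [inv_mul_cancel_left]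
    exact wch_spec e n (by simp [h2])
  · exact uch_spec e k (by simp [hEq])
  · have : uch e k ∈ pwL e k := (mem_pwL e).mpr ⟨n, h, Or.inr hEq.symm⟩
    exact uch_spec e k (by simp [this])

lemma uch_ne_bad {N a b c : ℕ} (ha : a < N) (hb : b < N) (hc : c < N) :
    uch e N ≠ uch e a * (uch e b)⁻¹ * uch e c := by
  intro hEq
  have hmem : uch e a * (uch e b)⁻¹ * uch e c ∈ badL e N := by
    rw [badL]
    refine List.mem_flatMap.mpr ⟨uch e a, (mem_puL e).mpr ⟨a, ha, rfl⟩, ?_⟩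
    refine List.mem_flatMap.mpr ⟨uch e b, (mem_puL e).mpr ⟨b, hb, rfl⟩, ?_⟩
    exact List.mem_map.mpr ⟨uch e c, (mem_puL e).mpr ⟨c, hc, rfl⟩, rfl⟩
  exact uch_spec e N (by simp [hEq, hmem])

lemma pairs_L0 (g : G) {i1 j1 i2 j2 : ℕ}
    (A : uch e j1 = g * uch e i1) (B : uch e j2 = g * uch e i2)
    (h1 : i1 < j1) (h2 : i2 < j1) (h3 : j2 < j1) : False := by
  have hg : g = uch e j2 * (uch e i2)⁻¹ := by rw [B, mul_inv_cancel_right]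
  exact uch_ne_bad e h3 h2 h1 (by rw [A, hg])

lemma pairs_L1 (g : G) {i1 i2 i3 j1 j2 j3 : ℕ}
    (E1 : uch e j1 = g * uch e i1) (E2 : uch e j2 = g * uch e i2)
    (E3 : uch e j3 = g * uch e i3)
    (b1 : i1 < j1) (b2 : i2 ≤ j1) (b3 : i3 ≤ j1) (b4 : j2 < j1) (b5 : j3 < j1)
    (d23 : i2 ≠ i3) : False := by
  by_cases h : i2 = j1
  · have h3 : i3 < j1 := lt_of_le_of_ne b3 (fun hh => d23 (h.trans hh.symm))
    exact pairs_L0 e g E1 E3 b1 h3 b5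
  · exact pairs_L0 e g E1 E2 b1 (lt_of_le_of_ne b2 h) b4

lemma three_pairs (g : G) (hg : g ≠ 1) {i1 i2 i3 j1 j2 j3 : ℕ}
    (E1 : uch e j1 = g * uch e i1) (E2 : uch e j2 = g * uch e i2)
    (E3 : uch e j3 = g * uch e i3)
    (d12 : i1 ≠ i2) (d13 : i1 ≠ i3) (d23 : i2 ≠ i3) : False := by
  have inj := uch_inj e
  have F1 : uch e i1 = g⁻¹ * uch e j1 := by rw [E1, inv_mul_cancel_left]
  have F2 : uch e i2 = g⁻¹ * uch e j2 := by rw [E2, inv_mul_cancel_left]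
  have F3 : uch e i3 = g⁻¹ * uch e j3 := by rw [E3, inv_mul_cancel_left]
  have jd12 : j1 ≠ j2 := by
    intro h
    exact d12 (inj (mul_left_cancel ((E1.symm.trans (h ▸ E2 : uch e j1 = g * uch e i2)) :
      g * uch e i1 = g * uch e i2)))
  have jd13 : j1 ≠ j3 := by
    intro h
    exact d13 (inj (mul_left_cancel ((E1.symm.trans (h ▸ E3 : uch e j1 = g * uch e i3)) :
      g * uch e i1 = g * uch e i3)))
  have jd23 : j2 ≠ j3 := by
    intro h
    exact d23 (inj (mul_left_cancel ((E2.symm.trans (h ▸ E3 : uch e j2 = g * uch e i3)) :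
      g * uch e i2 = g * uch e i3)))
  have n1 : i1 ≠ j1 := by
    rintro rfl; exact hg (right_eq_mul.mp E1)
  have n2 : i2 ≠ j2 := by
    rintro rfl; exact hg (right_eq_mul.mp E2)
  have n3 : i3 ≠ j3 := by
    rintro rfl; exact hg (right_eq_mul.mp E3)
  have hginv : g⁻¹ ≠ 1 := inv_ne_one.mpr hg
  have hsix : (i1 ≤ j1 ∧ i2 ≤ j1 ∧ i3 ≤ j1 ∧ j2 ≤ j1 ∧ j3 ≤ j1) ∨
      (i1 ≤ j2 ∧ i2 ≤ j2 ∧ i3 ≤ j2 ∧ j1 ≤ j2 ∧ j3 ≤ j2) ∨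
      (i1 ≤ j3 ∧ i2 ≤ j3 ∧ i3 ≤ j3 ∧ j1 ≤ j3 ∧ j2 ≤ j3) ∨
      (j1 ≤ i1 ∧ j2 ≤ i1 ∧ j3 ≤ i1 ∧ i2 ≤ i1 ∧ i3 ≤ i1) ∨
      (j1 ≤ i2 ∧ j2 ≤ i2 ∧ j3 ≤ i2 ∧ i1 ≤ i2 ∧ i3 ≤ i2) ∨
      (j1 ≤ i3 ∧ j2 ≤ i3 ∧ j3 ≤ i3 ∧ i1 ≤ i3 ∧ i2 ≤ i3) := by omega
  rcases hsix with h | h | h | h | h | h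
  · exact pairs_L1 e g E1 E2 E3 (by omega) (by omega) (by omega) (by omega) (by omega) d23
  · exact pairs_L1 e g E2 E1 E3 (by omega) (by omega) (by omega) (by omega) (by omega) d13
  · exact pairs_L1 e g E3 E1 E2 (by omega) (by omega) (by omega) (by omega) (by omega) d12
  · exact pairs_L1 e g⁻¹ F1 F2 F3 (by omega) (by omega) (by omega) (by omega) (by omega) jd23
  · exact pairs_L1 e g⁻¹ F2 F1 F3 (by omega) (by omega) (by omega) (by omega) (by omega) jd13
  · exact pairs_L1 e g⁻¹ F3 F1 F2 (by omega) (by omega) (by omega) (by omega) (by omega) jd12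

open Classical in
noncomputable def lab (β : G) : ℕ :=
  if h : ∃ k, uch e k = β then (Nat.unpair (Classical.choose h)).1 + 1 else 0

lemma lab_uch (k : ℕ) : lab e (uch e k) = (Nat.unpair k).1 + 1 := by
  have h : ∃ k', uch e k' = uch e k := ⟨k, rfl⟩
  rw [lab, dif_pos h]
  have := uch_inj e (Classical.choose_spec h)
  rw [this]

lemma lab_eq_zero {β : G} (h : ∀ k, uch e k ≠ β) : lab e β = 0 := by
  rw [lab, dif_neg]
  rintro ⟨k, hk⟩
  exact h k hk

lemma exists_escape (g : G) (hg : g ≠ 1) (m : ℕ) :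
    ∃ β : G, lab e β = m + 1 ∧ lab e (g * β) = 0 := by
  have hlab : ∀ t : ℕ, lab e (uch e (Nat.pair m t)) = m + 1 := by
    intro t; rw [lab_uch, Nat.unpair_pair]
  have hd : ∀ t t' : ℕ, t ≠ t' → Nat.pair m t ≠ Nat.pair m t' := by
    intro t t' ht h
    exact ht (Nat.pair_eq_pair.mp h).2
  by_cases h0 : ∀ j, uch e j ≠ g * uch e (Nat.pair m 0)
  · exact ⟨uch e (Nat.pair m 0), hlab 0, lab_eq_zero e h0⟩
  by_cases h1 : ∀ j, uch e j ≠ g * uch e (Nat.pair m 1)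
  · exact ⟨uch e (Nat.pair m 1), hlab 1, lab_eq_zero e h1⟩
  by_cases h2 : ∀ j, uch e j ≠ g * uch e (Nat.pair m 2)
  · exact ⟨uch e (Nat.pair m 2), hlab 2, lab_eq_zero e h2⟩
  push_neg at h0 h1 h2
  obtain ⟨j0, hj0⟩ := h0
  obtain ⟨j1, hj1⟩ := h1
  obtain ⟨j2, hj2⟩ := h2
  exact absurd (three_pairs e g hg hj0 hj1 hj2
    (hd 0 1 (by omega)) (hd 0 2 (by omega)) (hd 1 2 (by omega))) (fun f => f)

end JumpAux

/-- The Γ-jump of an equivalence relation `E` on `X`: the equivalence relation on `X^Γ`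
defined by `x E^{[Γ]} y` iff there is `γ ∈ Γ` with `x(γ⁻¹α) E y(α)` for all `α ∈ Γ`. -/
def GammaJump (Γ : Type*) [Group Γ] {X : Type*} (E : X → X → Prop) :
    (Γ → X) → (Γ → X) → Prop :=
  fun x y => ∃ γ : Γ, ∀ α : Γ, E (x (γ⁻¹ * α)) (y α)

/-- Borel reducibility of binary relations on measurable spaces. -/
def BorelReducible {X Y : Type*} [MeasurableSpace X] [MeasurableSpace Y]
    (E : X → X → Prop) (F : Y → Y → Prop) : Prop :=
  ∃ f : X → Y, Measurable f ∧ ∀ x x', E x x' ↔ F (f x) (f x')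

/-- For a Borel equivalence relation `E` on a standard Borel space `X`
and a countably infinite group `Γ`, the countable power `E^ω` is Borel reducible to
the Γ-jump `E^{[Γ]}`. -/
theorem omegaPower_borelReducible_gammaJump
    {X : Type*} [MeasurableSpace X] [StandardBorelSpace X]
    (E : X → X → Prop) (hE : Equivalence E)
    (hEBorel : MeasurableSet {p : X × X | E p.1 p.2})
    (Γ : Type*) [Group Γ] [Countable Γ] [Infinite Γ] :
    BorelReducible (fun x y : ℕ → X => ∀ n, E (x n) (y n)) (GammaJump Γ E) := by
  classical
  obtain ⟨e, he⟩ := exists_surjective_nat Γ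
  refine ⟨fun x β => x (lab e β), measurable_pi_lambda _ fun β => measurable_pi_apply _, fun x x' => ⟨?_, ?_⟩⟩
  · intro h
    refine ⟨1, fun α => ?_⟩
    have : (1 : Γ)⁻¹ * α = α := by rw [inv_one, one_mul]
    rw [this]
    exact h (lab e α)
  · rintro ⟨g, hgEq⟩
    have key : ∀ β : Γ, E (x (lab e β)) (x' (lab e (g * β))) := by
      intro β
      have := hgEq (g * β)
      rwa [inv_mul_cancel_left] at this
    by_cases hg1 : g = 1
    · subst hg1
      intro n
      cases n with
      | zero =>
        have h0 : lab e (wch e 0) = 0 := lab_eq_zero e fun k => uch_ne_wch e k 0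
        have := key (wch e 0)
        rwa [one_mul, h0] at this
      | succ m =>
        have := key (uch e (Nat.pair m 0))
        rwa [one_mul, lab_uch, Nat.unpair_pair] at this
    · obtain ⟨n0, hn0⟩ := he g
      have labw : lab e (wch e n0) = 0 := lab_eq_zero e fun k => uch_ne_wch e k n0
      have labgw : lab e (g * wch e n0) = 0 := by
        rw [← hn0]
        exact lab_eq_zero e fun k => uch_ne_eww e k n0
      have cross : E (x 0) (x' 0) := by
        have := key (wch e n0)
        rwa [labw, labgw] at this
      intro n
      cases n with
      | zero => exact cross
      | succ m =>
        obtain ⟨β1, hb1, hb2⟩ := exists_escape e g hg1 m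
        have f1 : E (x (m + 1)) (x' 0) := by
          have := key β1
          rwa [hb1, hb2] at this
        obtain ⟨β2, hc1, hc2⟩ := exists_escape e g⁻¹ (inv_ne_one.mpr hg1) m
        have f2 : E (x 0) (x' (m + 1)) := by
          have := key (g⁻¹ * β2)
          rwa [hc2, mul_inv_cancel_left, hc1] at this
        exact hE.trans (hE.trans f1 (hE.symm cross)) f2
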